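/- Let (α, 𝒜) be a measurable space, μ a probability measure on α, Q : α → ℝ a bounded measurable function, and set V = ∫ Q(a) dμ(a). Let f : ℝ → ℝ be a bounded, measurable, non-negative, monotone non-decreasing function, and suppose Z = ∫ f(Q(a) − V) dμ(a) > 0. Define the probability measure ν on α by dν/dμ = f(Q − V)/Z. Then ∫ Q(a) dν(a) ≥ ∫ Q(a) dμ(a). -/

import Mathlib

open MeasureTheory
open scoped NNReal ENNReal

lemma integrable_of_bdd {α : Type*} [MeasurableSpace α] (μ : Measure α)
    [IsFiniteMeasure μ] {g : α → ℝ} (hg : Measurable g) {C : ℝ}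
    (hC : ∀ a, |g a| ≤ C) : Integrable g μ := by
  refine (integrable_const C).mono' hg.aestronglyMeasurable ?_
  filter_upwards with a using hC a

/-- Per-state policy improvement by reweighting (Theorem A.4): the measure
`ν` with density `f(Q - V)/Z` w.r.t. `μ` has expected `Q`-value at least
`∫ Q dμ`. -/
theorem reweighting_improvement
    {α : Type*} [MeasurableSpace α]
    (μ : Measure α) [IsProbabilityMeasure μ]
    (Q : α → ℝ) (hQ_meas : Measurable Q) (hQ_bdd : ∃ C : ℝ, ∀ a, |Q a| ≤ C)
    (V : ℝ) (hV : V = ∫ a, Q a ∂μ)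
    (f : ℝ → ℝ)
    (hf_meas : Measurable f) (hf_bdd : ∃ C : ℝ, ∀ x, |f x| ≤ C)
    (hf_nonneg : ∀ x, 0 ≤ f x) (hf_mono : Monotone f)
    (Z : ℝ) (hZ : Z = ∫ a, f (Q a - V) ∂μ) (hZ_pos : 0 < Z)
    (ν : Measure α)
    (hν : ν = μ.withDensity (fun a => ENNReal.ofReal (f (Q a - V) / Z))) :
    ∫ a, Q a ∂ν ≥ ∫ a, Q a ∂μ := by
  obtain ⟨CQ, hCQ⟩ := hQ_bdd
  obtain ⟨Cf, hCf⟩ := hf_bdd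
  set g : α → ℝ := fun a => f (Q a - V) with hg_def
  have hg_meas : Measurable g := hf_meas.comp (hQ_meas.sub measurable_const)
  have hg_nonneg : ∀ a, 0 ≤ g a := fun a => hf_nonneg _
  have hg_int : Integrable g μ := integrable_of_bdd μ hg_meas (fun a => hCf _)
  have hQ_int : Integrable Q μ := integrable_of_bdd μ hQ_meas hCQ
  have hQg_int : Integrable (fun a => Q a * g a) μ := by
    refine integrable_of_bdd μ (hQ_meas.mul hg_meas) (C := CQ * Cf) (fun a => ?_)
    rw [abs_mul]
    exact mul_le_mul (hCQ a) (hCf _) (abs_nonneg _) ((abs_nonneg _).trans (hCQ a))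
  -- key pointwise inequality
  have hkey : ∀ a, (Q a - V) * f 0 ≤ (Q a - V) * g a := by
    intro a
    rcases le_total 0 (Q a - V) with h | h
    · exact mul_le_mul_of_nonneg_left (hf_mono h) h
    · exact mul_le_mul_of_nonpos_left (hf_mono h) h
  have hsub_int : Integrable (fun a => (Q a - V) * g a) μ := by
    have : (fun a => (Q a - V) * g a) = fun a => Q a * g a - V * g a := by
      funext a; ring
    rw [this]
    exact hQg_int.sub (hg_int.const_mul V)
  have hint1 : ∫ a, (Q a - V) * f 0 ∂μ = 0 := by
    rw [integral_mul_const, integral_sub hQ_int (integrable_const V),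
      integral_const, probReal_univ]
    simp [hV]
  have hkey_int : 0 ≤ ∫ a, (Q a - V) * g a ∂μ := by
    rw [← hint1]
    exact integral_mono ((hQ_int.sub (integrable_const V)).mul_const _) hsub_int hkey
  have hQgZ : V * Z ≤ ∫ a, Q a * g a ∂μ := by
    have : ∫ a, (Q a - V) * g a ∂μ = ∫ a, Q a * g a ∂μ - V * Z := by
      have h1 : (fun a => (Q a - V) * g a) = fun a => Q a * g a - V * g a := by
        funext a; ring
      rw [h1, integral_sub hQg_int (hg_int.const_mul V), integral_const_mul, hZ]
    linarith [hkey_int, this ▸ hkey_int]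
  -- compute ∫ Q dν
  have hdens : (fun a => ENNReal.ofReal (f (Q a - V) / Z))
      = fun a => ((Real.toNNReal (g a / Z) : ℝ≥0) : ℝ≥0∞) := by
    funext a; rfl
  have hνint : ∫ a, Q a ∂ν = ∫ a, (g a / Z) * Q a ∂μ := by
    rw [hν, hdens, integral_withDensity_eq_integral_smul
      (by exact (hg_meas.div_const Z).real_toNNReal)]
    congr 1; funext a
    rw [NNReal.smul_def, Real.coe_toNNReal _ (div_nonneg (hg_nonneg a) hZ_pos.le)]
    simp [smul_eq_mul]
  rw [hνint, ← hV]
  have : ∫ a, (g a / Z) * Q a ∂μ = (∫ a, Q a * g a ∂μ) / Z := by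
    rw [← integral_div]
    congr 1; funext a; ring
  rw [this, ge_iff_le, le_div_iff₀ hZ_pos]
  linarith [hQgZ]
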